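/- Let Γ be a weighted graph admitting a lattice embedding F into ℤ^N. Suppose that for some coordinate index i there are exactly three vertices A, B, C whose images under F have nonzero i-th coordinate, that B and C are adjacent, that the i-th coordinates of F(B) and F(C) are 1 and −1 in some order, and that the i-th coordinate of F(A) is d ≠ 0. Let Γ' be the weighted graph obtained from Γ by deleting the edge BC, adding one new vertex D of weight −2 adjacent exactly to B and C, and decreasing the weight of A by d². Then Γ' admits a lattice embedding into ℤ^{N+1}. (IGOCL operations preserve lattice embeddability.) -/

import Mathlib

/-- The standard negative definite bilinear form on `ℤ^N`. -/
def negForm {N : ℕ} (x y : Fin N → ℤ) : ℤ := -∑ i, x i * y i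

/-- A lattice embedding of a weighted graph `(G, w)` into `ℤ^N` with its negative
definite form. -/
def IsLatticeEmbedding {V : Type*} (G : SimpleGraph V) (w : V → ℤ) {N : ℕ}
    (F : V → Fin N → ℤ) : Prop :=
  (∀ v, negForm (F v) (F v) = w v) ∧
  (∀ u v, G.Adj u v → negForm (F u) (F v) = 1) ∧
  (∀ u v, u ≠ v → ¬G.Adj u v → negForm (F u) (F v) = 0)

/-- The graph obtained from `G` by deleting the edge `BC` and adding one new vertex
adjacent exactly to `B` and `C`. -/
def igoclGraph {V : Type*} [DecidableEq V] (G : SimpleGraph V) (B C : V) :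
    SimpleGraph (V ⊕ Unit) :=
  SimpleGraph.fromRel (fun x y =>
    match x, y with
    | .inl u, .inl v => G.Adj u v ∧ ¬(u = B ∧ v = C) ∧ ¬(u = C ∧ v = B)
    | .inl u, .inr _ => u = B ∨ u = C
    | .inr _, _ => False)

lemma negForm_snoc {N : ℕ} (a b : Fin N → ℤ) (x y : ℤ) :
    negForm (Fin.snoc a x) (Fin.snoc b y) = negForm a b - x * y := by
  simp [negForm, Fin.sum_univ_castSucc]; ring

lemma sumL {N : ℕ} (i : Fin N) (a b : Fin N → ℤ) :
    ∑ j, (if j = i then 0 else a j) * b j = (∑ j, a j * b j) - a i * b i := by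
  have h : ∀ j ∈ Finset.univ, (if j = i then 0 else a j) * b j
      = a j * b j - (if j = i then a i * b i else 0) := by
    intro j _; by_cases h : j = i <;> simp [h]
  rw [Finset.sum_congr rfl h, Finset.sum_sub_distrib]
  simp

lemma sumR {N : ℕ} (i : Fin N) (a b : Fin N → ℤ) :
    ∑ j, a j * (if j = i then 0 else b j) = (∑ j, a j * b j) - a i * b i := by
  have := sumL i b a
  simp only [mul_comm] at this ⊢
  exact this

lemma sumE {N : ℕ} (i : Fin N) (c : ℤ) (b : Fin N → ℤ) :
    ∑ j, (if j = i then c else 0) * b j = c * b i := by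
  rw [Finset.sum_eq_single_of_mem i (Finset.mem_univ i)]
  · simp
  · intro j _ hj; simp [hj]

lemma sumE' {N : ℕ} (i : Fin N) (c : ℤ) (b : Fin N → ℤ) :
    ∑ j, b j * (if j = i then c else 0) = b i * c := by
  rw [Finset.sum_eq_single_of_mem i (Finset.mem_univ i)]
  · simp
  · intro j _ hj; simp [hj]

/-- IGOCL operations preserve lattice embeddability. -/
theorem igocl_preserves_embeddability {V : Type*} [Fintype V] [DecidableEq V]
    (G : SimpleGraph V) (w : V → ℤ) {N : ℕ} (F : V → Fin N → ℤ)
    (hF : IsLatticeEmbedding G w F)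
    (i : Fin N) (A B C : V) (hAB : A ≠ B) (hAC : A ≠ C) (hBC : B ≠ C)
    (hadj : G.Adj B C)
    (honly : ∀ v, F v i ≠ 0 → v = A ∨ v = B ∨ v = C)
    (hBCcoord : (F B i = 1 ∧ F C i = -1) ∨ (F B i = -1 ∧ F C i = 1))
    (d : ℤ) (hA : F A i = d) (hd : d ≠ 0) :
    ∃ F' : V ⊕ Unit → Fin (N + 1) → ℤ,
      IsLatticeEmbedding (igoclGraph G B C)
        (fun x => match x with
          | .inl v => if v = A then w v - d ^ 2 else w v
          | .inr _ => -2) F' := by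
  obtain ⟨hw, hadjF, hnadjF⟩ := hF
  obtain ⟨s, hss, hBs, hCs⟩ : ∃ s : ℤ, s * s = 1 ∧ F B i = s ∧ F C i = -s := by
    rcases hBCcoord with ⟨h1, h2⟩ | ⟨h1, h2⟩
    · exact ⟨1, by norm_num, h1, by rw [h2]⟩
    · exact ⟨-1, by norm_num, h1, by rw [h2]; ring⟩
  set g : V → Fin N → ℤ := fun v j => if v = C ∧ j = i then 0 else F v j with hg
  set h : V → ℤ := fun v => if v = A then -d else if v = C then s else 0 with hh
  set e : Fin N → ℤ := fun j => if j = i then -s else 0 with he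
  have hgC : ∀ v, v ≠ C → g v = F v := by
    intro v hv; funext j; simp [hg, hv]
  have hCA : C ≠ A := Ne.symm hAC
  have hBA : B ≠ A := Ne.symm hAB
  have negC_left : ∀ v, v ≠ C →
      negForm (g C) (g v) = -(∑ j, F C j * F v j - F C i * F v i) := by
    intro v hv
    have key : ∀ j, g C j * g v j = (if j = i then 0 else F C j) * F v j := by
      intro j; by_cases hj : j = i <;> simp [hg, hj, hv]
    simp only [negForm, Finset.sum_congr rfl (fun j _ => key j), sumL]
  have negC_right : ∀ u, u ≠ C →
      negForm (F u) (g C) = -(∑ j, F u j * F C j - F u i * F C i) := by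
    intro u hu
    have key : ∀ j, F u j * g C j = F u j * (if j = i then 0 else F C j) := by
      intro j; by_cases hj : j = i <;> simp [hg, hj]
    simp only [negForm, Finset.sum_congr rfl (fun j _ => key j), sumR]
  refine ⟨Sum.elim (fun v => Fin.snoc (g v) (h v)) (fun _ => Fin.snoc e (-s)), ?_, ?_, ?_⟩
  · -- weights
    rintro (v | u)
    · simp only [Sum.elim_inl, negForm_snoc]
      by_cases hvC : v = C
      · rw [hvC]
        have hCC : negForm (g C) (g C) = negForm (F C) (F C) + (F C i) * (F C i) := by
          have key : ∀ j, g C j * g C j = (if j = i then 0 else F C j) * F C j := by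
            intro j; by_cases hj : j = i <;> simp [hg, hj]
          simp only [negForm, Finset.sum_congr rfl (fun j _ => key j), sumL]
          ring
        rw [hCC, hw C]
        simp [hh, hCA, hCs]
      · by_cases hvA : v = A
        · rw [hvA]
          have hgA : g A = F A := hgC A hAC
          rw [hgA, hw A]
          simp [hh, hAC]
          ring
        · rw [hgC v hvC, hw v]
          simp [hh, hvA, hvC]
    · simp only [Sum.elim_inr, negForm_snoc]
      have hee : negForm e e = -(s * s) := by
        have key : ∀ j, e j * e j = (if j = i then s * s else 0) := by
          intro j; by_cases hj : j = i <;> simp [he, hj]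
        simp only [negForm, Finset.sum_congr rfl (fun j _ => key j), Finset.sum_ite_eq',
          Finset.mem_univ, if_true]
      rw [hee, hss]
      linarith [hss]
  · -- adjacency
    rintro (u | u) (v | v) hadj'
    · -- inl / inl
      rw [igoclGraph, SimpleGraph.fromRel_adj] at hadj'
      obtain ⟨hne, hrel⟩ := hadj'
      have hne' : u ≠ v := fun hc => hne (by rw [hc])
      have hGadj : G.Adj u v := by
        rcases hrel with ⟨h1, _⟩ | ⟨h1, _⟩
        · exact h1
        · exact h1.symm
      have hnBC : ¬(u = B ∧ v = C) := by rcases hrel with ⟨_, h1, h2⟩ | ⟨_, h1, h2⟩ <;> tauto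
      have hnCB : ¬(u = C ∧ v = B) := by rcases hrel with ⟨_, h1, h2⟩ | ⟨_, h1, h2⟩ <;> tauto
      have hsum : ∑ j, F u j * F v j = -1 := by
        have := hadjF u v hGadj; simp [negForm] at this; linarith
      simp only [Sum.elim_inl, negForm_snoc]
      by_cases huC : u = C
      · have hvB : v ≠ B := fun hc => hnCB ⟨huC, hc⟩
        have hvC : v ≠ C := fun hc => hne' (huC.trans hc.symm)
        rw [huC] at hsum ⊢
        rw [negC_left v hvC, hsum, hCs]
        by_cases hvA : v = A
        · rw [hvA]
          simp [hh, hCA, hA]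
        · have hv0 : F v i = 0 := by
            by_contra hc
            rcases honly v hc with h' | h' | h' <;> tauto
          simp [hh, hv0, hCA, hvA, hvC]
      · by_cases hvC : v = C
        · have huB : u ≠ B := fun hc => hnBC ⟨hc, hvC⟩
          rw [hvC] at hsum ⊢
          rw [hgC u huC, negC_right u huC, hsum, hCs]
          by_cases huA : u = A
          · rw [huA]
            simp [hh, hCA, hA, hAC]
          · have hu0 : F u i = 0 := by
              by_contra hc
              rcases honly u hc with h' | h' | h' <;> tauto
            simp [hh, hu0, hCA, huA, huC]
        · rw [hgC u huC, hgC v hvC, hadjF u v hGadj]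
          have hhh : h u * h v = 0 := by
            by_cases huA : u = A
            · have hvA : v ≠ A := fun hc => hne' (huA.trans hc.symm)
              simp [hh, hvA, hvC]
            · simp [hh, huA, huC]
          rw [hhh]; ring
    · -- inl / inr
      rw [igoclGraph, SimpleGraph.fromRel_adj] at hadj'
      obtain ⟨-, hrel⟩ := hadj'
      have huBC : u = B ∨ u = C := by rcases hrel with h1 | h1 <;> tauto
      simp only [Sum.elim_inl, Sum.elim_inr, negForm_snoc]
      rcases huBC with huB | huC
      · rw [huB]
        have hmain : negForm (F B) e = -(F B i * (-s)) := by
          simp only [negForm, he, sumE']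
        rw [hgC B hBC, hmain, hBs]
        simp [hh, hBA, hBC]
        linarith [hss]
      · rw [huC]
        have hmain : negForm (g C) e = 0 := by
          have key : ∀ j, g C j * e j = 0 := by
            intro j; by_cases hj : j = i <;> simp [hg, he, hj]
          simp [negForm, Finset.sum_congr rfl (fun j _ => key j)]
        rw [hmain]
        simp [hh, hCA]
        linarith [hss]
    · -- inr / inl
      rw [igoclGraph, SimpleGraph.fromRel_adj] at hadj'
      obtain ⟨-, hrel⟩ := hadj'
      have hvBC : v = B ∨ v = C := by rcases hrel with h1 | h1 <;> tauto
      simp only [Sum.elim_inl, Sum.elim_inr, negForm_snoc]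
      rcases hvBC with hvB | hvC
      · rw [hvB]
        have hmain : negForm e (F B) = -((-s) * F B i) := by
          simp only [negForm, he, sumE]
        rw [hgC B hBC, hmain, hBs]
        simp [hh, hBA, hBC]
        linarith [hss]
      · rw [hvC]
        have hmain : negForm e (g C) = 0 := by
          have key : ∀ j, e j * g C j = 0 := by
            intro j; by_cases hj : j = i <;> simp [hg, he, hj]
          simp [negForm, Finset.sum_congr rfl (fun j _ => key j)]
        rw [hmain]
        simp [hh, hCA]
        linarith [hss]
    · -- inr / inr
      exfalso
      rw [igoclGraph, SimpleGraph.fromRel_adj] at hadj'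
      exact hadj'.2.elim id id
  · -- non-adjacency
    rintro (u | u) (v | v) hne hnadj
    · -- inl / inl
      have hne' : u ≠ v := fun hc => hne (by rw [hc])
      rw [igoclGraph, SimpleGraph.fromRel_adj] at hnadj
      push_neg at hnadj
      have hnrel := hnadj hne
      simp only [Sum.elim_inl, negForm_snoc]
      by_cases hBCcase : (u = B ∧ v = C) ∨ (u = C ∧ v = B)
      · have hsumBC : ∑ j, F B j * F C j = -1 := by
          have := hadjF B C hadj; simp [negForm] at this; linarith
        rcases hBCcase with ⟨huB, hvC⟩ | ⟨huC, hvB⟩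
        · rw [huB, hvC]
          rw [hgC B hBC, negC_right B hBC, hsumBC, hBs, hCs]
          simp [hh, hBA, hCA, hBC]
          linarith [hss]
        · rw [huC, hvB]
          have hsumCB : ∑ j, F C j * F B j = -1 := by
            rw [Finset.sum_congr rfl (fun j _ => mul_comm (F C j) (F B j))]; exact hsumBC
          rw [negC_left B hBC, hsumCB, hBs, hCs]
          simp [hh, hBA, hCA, hBC]
          linarith [hss]
      · push_neg at hBCcase
        have hGnadj : ¬G.Adj u v := by
          intro hGadj
          exact hBCcase.2 (hnrel.1 hGadj hBCcase.1).1 (hnrel.1 hGadj hBCcase.1).2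
        have hsum : ∑ j, F u j * F v j = 0 := by
          have := hnadjF u v hne' hGnadj; simp [negForm] at this; linarith
        by_cases huC : u = C
        · have hvB : v ≠ B := hBCcase.2 huC
          have hvC : v ≠ C := fun hc => hne' (huC.trans hc.symm)
          rw [huC] at hsum ⊢
          rw [negC_left v hvC, hsum, hCs]
          by_cases hvA : v = A
          · rw [hvA]
            simp [hh, hCA, hA]
          · have hv0 : F v i = 0 := by
              by_contra hc
              rcases honly v hc with h' | h' | h' <;> tauto
            simp [hh, hv0, hCA, hvA, hvC]
        · by_cases hvC : v = C
          · have huB : u ≠ B := fun hc => hBCcase.1 hc hvC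
            rw [hvC] at hsum ⊢
            rw [hgC u huC, negC_right u huC, hsum, hCs]
            by_cases huA : u = A
            · rw [huA]
              simp [hh, hCA, hA, hAC]
            · have hu0 : F u i = 0 := by
                by_contra hc
                rcases honly u hc with h' | h' | h' <;> tauto
              simp [hh, hu0, hCA, huA, huC]
          · rw [hgC u huC, hgC v hvC, hnadjF u v hne' hGnadj]
            have hhh : h u * h v = 0 := by
              by_cases huA : u = A
              · have hvA : v ≠ A := fun hc => hne' (huA.trans hc.symm)
                simp [hh, hvA, hvC]
              · simp [hh, huA, huC]
            rw [hhh]; ring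
    · -- inl / inr
      rw [igoclGraph, SimpleGraph.fromRel_adj] at hnadj
      push_neg at hnadj
      have hnrel := hnadj hne
      have huB : u ≠ B := fun hc => hnrel.1.1 hc
      have huC : u ≠ C := fun hc => hnrel.1.2 hc
      simp only [Sum.elim_inl, Sum.elim_inr, negForm_snoc]
      have hmain : negForm (F u) e = -(F u i * (-s)) := by
        simp only [negForm, he, sumE']
      rw [hgC u huC, hmain]
      by_cases huA : u = A
      · rw [huA, hA]
        simp [hh]
      · have hu0 : F u i = 0 := by
          by_contra hc
          rcases honly u hc with h' | h' | h' <;> tauto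
        simp [hh, hu0, huA, huC]
    · -- inr / inl
      rw [igoclGraph, SimpleGraph.fromRel_adj] at hnadj
      push_neg at hnadj
      have hnrel := hnadj hne
      have hvB : v ≠ B := fun hc => hnrel.2.1 hc
      have hvC : v ≠ C := fun hc => hnrel.2.2 hc
      simp only [Sum.elim_inl, Sum.elim_inr, negForm_snoc]
      have hmain : negForm e (F v) = -((-s) * F v i) := by
        simp only [negForm, he, sumE]
      rw [hgC v hvC, hmain]
      by_cases hvA : v = A
      · rw [hvA, hA]
        simp [hh]
      · have hv0 : F v i = 0 := by
          by_contra hc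
          rcases honly v hc with h' | h' | h' <;> tauto
        simp [hh, hv0, hvA, hvC]
    · -- inr / inr
      exact absurd rfl hne
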